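/- arXiv:1903.11182 — 3 statements merged into one kernel-verified Lean document; each statement's English description precedes it below -/
import Mathlib

section
/- Let p be analytic on the open unit disc 𝔻 with p(0) = 1, Re p(z) > 0 for all z ∈ 𝔻, and Taylor expansion p(z) = 1 + Σ_{n≥1} c_n zⁿ, and suppose c₁ is real with 0 ≤ c₁ ≤ 2. Then there exist complex numbers x and w with |x| ≤ 1 and |w| ≤ 1 such that 2c₂ = c₁² + (4 − c₁²)·x and 4c₃ = c₁³ + 2c₁(4 − c₁²)·x − c₁(4 − c₁²)·x² + 2(4 − c₁²)(1 − |x|²)·w. -/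
open Metric Filter Function Topology

private lemma eq_at_zero {F G : ℂ → ℂ} (hF : ContinuousAt F 0) (hG : ContinuousAt G 0)
    (h : ∀ z ∈ ball (0:ℂ) 1, z ≠ 0 → F z = G z) : F 0 = G 0 := by
  have hb : ∀ᶠ z in 𝓝[≠] (0:ℂ), F z = G z := by
    have h1 : ∀ᶠ z in 𝓝 (0:ℂ), z ∈ ball (0:ℂ) 1 :=
      isOpen_ball.mem_nhds (by simp)
    filter_upwards [eventually_nhdsWithin_of_eventually_nhds h1,
      self_mem_nhdsWithin] with z hz hz0
    exact h z hz hz0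
  exact tendsto_nhds_unique
    ((hF.tendsto.mono_left nhdsWithin_le_nhds).congr' hb)
    (hG.tendsto.mono_left nhdsWithin_le_nhds)

private lemma one_sub_ne {w : ℂ} (h : ‖w‖ < 1) : (1:ℂ) - w ≠ 0 := by
  intro he
  have : w = 1 := by linear_combination -he
  simp [this] at h

private lemma moebius_le_one {a g : ℂ} (ha : ‖a‖ ≤ 1) (hg : ‖g‖ < 1) :
    ‖(a - g) / (1 - (starRingEnd ℂ) g * a)‖ ≤ 1 := by
  have hden : (1:ℂ) - (starRingEnd ℂ) g * a ≠ 0 := by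
    apply one_sub_ne
    rw [norm_mul, RCLike.norm_conj]
    calc ‖g‖ * ‖a‖ ≤ ‖g‖ * 1 := by
          exact mul_le_mul_of_nonneg_left ha (norm_nonneg g)
      _ < 1 := by simpa using hg
  rw [norm_div, div_le_one (norm_pos_iff.mpr hden)]
  have ha2 : a.re^2 + a.im^2 ≤ 1 := by
    have h1 : Complex.normSq a ≤ 1 := by
      rw [← Complex.sq_norm]
      exact pow_le_one₀ (norm_nonneg a) ha
    simpa [Complex.normSq_apply, pow_two] using h1
  have hg2 : g.re^2 + g.im^2 ≤ 1 := by
    have h1 : Complex.normSq g ≤ 1 := by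
      rw [← Complex.sq_norm]
      exact pow_le_one₀ (norm_nonneg g) hg.le
    simpa [Complex.normSq_apply, pow_two] using h1
  have key : Complex.normSq (a - g) ≤ Complex.normSq (1 - (starRingEnd ℂ) g * a) := by
    simp only [Complex.normSq_apply, Complex.sub_re, Complex.sub_im, Complex.one_re,
      Complex.one_im, Complex.mul_re, Complex.mul_im, Complex.conj_re, Complex.conj_im]
    nlinarith [mul_nonneg (sub_nonneg.2 ha2) (sub_nonneg.2 hg2)]
  calc ‖a - g‖ = Real.sqrt (Complex.normSq (a-g)) := by
        rw [Complex.norm_def]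
    _ ≤ Real.sqrt (Complex.normSq (1 - (starRingEnd ℂ) g * a)) := Real.sqrt_le_sqrt key
    _ = _ := by rw [Complex.norm_def]

private lemma analyticAt_dslope_zero {f : ℂ → ℂ} (h : AnalyticAt ℂ f 0) :
    AnalyticAt ℂ (dslope f 0) 0 := by
  obtain ⟨q, hq⟩ := h
  exact ⟨q.fslope, hq.has_fpower_series_dslope_fslope⟩

private lemma diffOn_dslope_zero {f : ℂ → ℂ} (hf : DifferentiableOn ℂ f (ball (0:ℂ) 1))
    (h0 : AnalyticAt ℂ f 0) : DifferentiableOn ℂ (dslope f 0) (ball (0:ℂ) 1) := by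
  intro z hz
  rcases eq_or_ne z 0 with rfl | hne
  · exact (analyticAt_dslope_zero h0).differentiableAt.differentiableWithinAt
  · exact (differentiableWithinAt_dslope_of_ne hne).2 (hf z hz)

private lemma schwarz_dslope {f : ℂ → ℂ} (hf : DifferentiableOn ℂ f (ball (0:ℂ) 1))
    (h0 : AnalyticAt ℂ f 0) (hf0 : f 0 = 0)
    (hb : ∀ z ∈ ball (0:ℂ) 1, ‖f z‖ ≤ 1) :
    ∀ z ∈ ball (0:ℂ) 1, ‖dslope f 0 z‖ ≤ 1 := by
  intro z hz
  have hg := diffOn_dslope_zero hf h0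
  have key : ∀ r : ℝ, ‖z‖ < r → r < 1 → ‖dslope f 0 z‖ ≤ 1 / r := by
    intro r hzr hr1
    have hr0 : 0 < r := lt_of_le_of_lt (norm_nonneg z) hzr
    have hsub : closedBall (0:ℂ) r ⊆ ball (0:ℂ) 1 := by
      intro w hw
      simp only [mem_closedBall, mem_ball, dist_zero_right] at hw ⊢
      exact lt_of_le_of_lt hw hr1
    have hdc : DiffContOnCl ℂ (dslope f 0) (ball (0:ℂ) r) := by
      constructor
      · exact hg.mono (fun w hw => hsub (ball_subset_closedBall hw))
      · rw [closure_ball (0:ℂ) hr0.ne']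
        exact (hg.continuousOn).mono hsub
    have hfr : ∀ w ∈ frontier (ball (0:ℂ) r), ‖dslope f 0 w‖ ≤ 1 / r := by
      intro w hw
      rw [frontier_ball (0:ℂ) hr0.ne'] at hw
      have hwn : ‖w‖ = r := by simpa [mem_sphere_iff_norm] using hw
      have hwne : w ≠ 0 := by
        intro h; rw [h] at hwn; simp at hwn; exact hr0.ne hwn
      have hwD : w ∈ ball (0:ℂ) 1 := hsub (mem_closedBall_zero_iff.mpr hwn.le)
      rw [dslope_of_ne f hwne, slope_def_field, hf0, sub_zero, sub_zero, norm_div, hwn]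
      gcongr
      exact hb w hwD
    have hzc : z ∈ closure (ball (0:ℂ) r) := subset_closure (by
      simp only [mem_ball, dist_zero_right]; exact hzr)
    exact Complex.norm_le_of_forall_mem_frontier_norm_le isBounded_ball hdc hfr hzc
  by_contra hcon
  push_neg at hcon
  set m := ‖dslope f 0 z‖ with hm
  have hm1 : 1 < m := hcon
  have hm0 : 0 < m := lt_trans one_pos hm1
  set r : ℝ := max ((‖z‖ + 1)/2) ((1/m + 1)/2) with hr
  have hz1 : ‖z‖ < 1 := by simpa [mem_ball, dist_zero_right] using hz
  have h1m : 1/m < 1 := by rw [div_lt_one hm0]; exact hm1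
  have hzr : ‖z‖ < r := lt_of_lt_of_le (by linarith) (le_max_left _ _)
  have hr1 : r < 1 := max_lt (by linarith) (by linarith)
  have hinv : 1/m < r := lt_of_lt_of_le (by linarith) (le_max_right _ _)
  have hkey := key r hzr hr1
  have hrpos : 0 < r := lt_trans (by positivity) hinv
  have h2 : 1/r < m := by
    rw [div_lt_iff₀ hrpos]
    calc (1:ℝ) = m * (1/m) := by field_simp
    _ < m * r := by exact mul_lt_mul_of_pos_left hinv hm0
  linarith

private lemma ofScalars_coeff (c : ℕ → ℂ) (n : ℕ) :
    (FormalMultilinearSeries.ofScalars ℂ c).coeff n = c n := by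
  simp only [FormalMultilinearSeries.coeff, FormalMultilinearSeries.ofScalars,
    ContinuousMultilinearMap.smul_apply, ContinuousMultilinearMap.mkPiAlgebraFin_apply,
    smul_eq_mul]
  norm_num [List.prod_ofFn]

private lemma hasFP (p : ℂ → ℂ) (c : ℕ → ℂ)
    (hexp : ∀ z ∈ ball (0 : ℂ) 1, HasSum (fun n => c n * z ^ n) (p z)) :
    HasFPowerSeriesAt p (FormalMultilinearSeries.ofScalars ℂ c) 0 := by
  rw [hasFPowerSeriesAt_iff]
  have h1 : ∀ᶠ z in 𝓝 (0:ℂ), z ∈ ball (0:ℂ) 1 := isOpen_ball.mem_nhds (by simp)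
  filter_upwards [h1] with z hz
  have := hexp z hz
  simpa [ofScalars_coeff, smul_eq_mul, mul_comm] using this

-- max modulus: derivative at the centre of a maximizing point vanishes
private lemma deriv_zero_of_max {f : ℂ → ℂ} (hd : DifferentiableOn ℂ f (ball (0:ℂ) 1))
    (hb : ∀ z ∈ ball (0:ℂ) 1, ‖f z‖ ≤ ‖f 0‖) :
    (∀ z ∈ ball (0:ℂ) 1, f z = f 0) := by
  have h0 : (0:ℂ) ∈ ball (0:ℂ) 1 := by simp
  have hmax : IsMaxOn (norm ∘ f) (ball (0:ℂ) 1) 0 := fun z hz => hb z hz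
  exact Complex.eqOn_of_isPreconnected_of_isMaxOn_norm
      (convex_ball (0:ℂ) 1).isPreconnected isOpen_ball hd h0 hmax
/-- If `p` is analytic on the unit disc with `p(0) = 1`, positive real part, expansion
`p(z) = 1 + ∑_{n≥1} cₙ zⁿ`, and `c₁` real with `0 ≤ c₁ ≤ 2`, then there exist `x`, `w`
with `|x| ≤ 1`, `|w| ≤ 1` such that `2c₂ = c₁² + (4 - c₁²)x` and
`4c₃ = c₁³ + 2c₁(4 - c₁²)x - c₁(4 - c₁²)x² + 2(4 - c₁²)(1 - |x|²)w`. -/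
theorem caratheodory_c2_c3 (p : ℂ → ℂ) (c : ℕ → ℂ) (hc0 : c 0 = 1)
    (hp : AnalyticOn ℂ p (Metric.ball (0 : ℂ) 1))
    (hexp : ∀ z ∈ Metric.ball (0 : ℂ) 1, HasSum (fun n => c n * z ^ n) (p z))
    (hre : ∀ z ∈ Metric.ball (0 : ℂ) 1, 0 < (p z).re)
    (hc1im : (c 1).im = 0) (hc1lo : 0 ≤ (c 1).re) (hc1hi : (c 1).re ≤ 2) :
    ∃ x w : ℂ, ‖x‖ ≤ 1 ∧ ‖w‖ ≤ 1 ∧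
      2 * c 2 = c 1 ^ 2 + (4 - c 1 ^ 2) * x ∧
      4 * c 3 = c 1 ^ 3 + 2 * c 1 * (4 - c 1 ^ 2) * x - c 1 * (4 - c 1 ^ 2) * x ^ 2 +
        2 * (4 - c 1 ^ 2) * (1 - ((‖x‖ : ℝ) : ℂ) ^ 2) * w := by
  have h0D : (0:ℂ) ∈ ball (0:ℂ) 1 := by simp
  have hnhds : ball (0:ℂ) 1 ∈ 𝓝 (0:ℂ) := isOpen_ball.mem_nhds h0D
  have hnz : ∀ z ∈ ball (0:ℂ) 1, p z + 1 ≠ 0 := by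
    intro z hz h
    have h1 := hre z hz
    have h2 : p z = -1 := by linear_combination h
    rw [h2] at h1; norm_num at h1
  -- power series facts
  have hq := hasFP p c hexp
  have hq1 := hq.has_fpower_series_dslope_fslope
  have hq2 := hq1.has_fpower_series_dslope_fslope
  have hp0 : p 0 = 1 := by
    have h1 := hq.coeff_zero (fun _ => 1)
    have h2 : (FormalMultilinearSeries.ofScalars ℂ c) 0 (fun _ => 1) = c 0 :=
      ofScalars_coeff c 0
    rw [h2, hc0] at h1
    exact h1.symm
  set p1 := dslope p 0 with hp1def
  set p2 := dslope p1 0 with hp2def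
  set p3 := dslope p2 0 with hp3def
  have hp10 : p1 0 = c 1 := by
    rw [hp1def, dslope_same, hq.deriv]; simp [ofScalars_coeff]
  have hp20 : p2 0 = c 2 := by
    rw [hp2def, dslope_same, hq1.deriv]; simp [ofScalars_coeff]
  have hp30 : p3 0 = c 3 := by
    rw [hp3def, dslope_same, hq2.deriv]; simp [ofScalars_coeff]
  -- differentiability
  have hpd : DifferentiableOn ℂ p (ball (0:ℂ) 1) := hp.differentiableOn
  have hpa : AnalyticAt ℂ p 0 := hq.analyticAt
  have hp1d : DifferentiableOn ℂ p1 (ball (0:ℂ) 1) := diffOn_dslope_zero hpd hpa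
  have hp1a : AnalyticAt ℂ p1 0 := hq1.analyticAt
  have hp2d : DifferentiableOn ℂ p2 (ball (0:ℂ) 1) := diffOn_dslope_zero hp1d hp1a
  have hp2a : AnalyticAt ℂ p2 0 := hq2.analyticAt
  have hp3d : DifferentiableOn ℂ p3 (ball (0:ℂ) 1) := diffOn_dslope_zero hp2d hp2a
  have contAt : ∀ {f : ℂ → ℂ}, DifferentiableOn ℂ f (ball (0:ℂ) 1) → ContinuousAt f 0 :=
    fun hf => (hf.differentiableAt hnhds).continuousAt
  -- φ and its dslope chain
  set φ : ℂ → ℂ := fun z => (p z - 1)/(p z + 1) with hφdef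
  have hφd : DifferentiableOn ℂ φ (ball (0:ℂ) 1) :=
    DifferentiableOn.div (hpd.sub (differentiableOn_const 1))
      (hpd.add (differentiableOn_const 1)) hnz
  have hφa : AnalyticAt ℂ φ 0 := by
    apply AnalyticAt.div (hpa.sub analyticAt_const) (hpa.add analyticAt_const)
    simp [hp0]
  have hφ0 : φ 0 = 0 := by rw [hφdef]; simp [hp0]
  have hφb : ∀ z ∈ ball (0:ℂ) 1, ‖φ z‖ ≤ 1 := by
    intro z hz
    have hzre := hre z hz
    have hpos : 0 < ‖p z + 1‖ := norm_pos_iff.mpr (hnz z hz)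
    rw [hφdef]
    simp only []
    rw [norm_div, div_le_one hpos]
    have key : Complex.normSq (p z - 1) ≤ Complex.normSq (p z + 1) := by
      simp only [Complex.normSq_apply, Complex.sub_re, Complex.sub_im, Complex.add_re,
        Complex.add_im, Complex.one_re, Complex.one_im]
      nlinarith [hzre]
    calc ‖p z - 1‖ = Real.sqrt (Complex.normSq (p z - 1)) := by
          rw [Complex.norm_def]
      _ ≤ Real.sqrt (Complex.normSq (p z + 1)) := Real.sqrt_le_sqrt key
      _ = ‖p z + 1‖ := by rw [Complex.norm_def]
  set ψ := dslope φ 0 with hψdef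
  have hψd : DifferentiableOn ℂ ψ (ball (0:ℂ) 1) := diffOn_dslope_zero hφd hφa
  have hψa : AnalyticAt ℂ ψ 0 := analyticAt_dslope_zero hφa
  have hψb : ∀ z ∈ ball (0:ℂ) 1, ‖ψ z‖ ≤ 1 := schwarz_dslope hφd hφa hφ0 hφb
  set A := ψ 0 with hAdef
  set u := dslope ψ 0 with hudef
  have hud : DifferentiableOn ℂ u (ball (0:ℂ) 1) := diffOn_dslope_zero hψd hψa
  have hua : AnalyticAt ℂ u 0 := analyticAt_dslope_zero hψa
  set v := dslope u 0 with hvdef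
  have hvd : DifferentiableOn ℂ v (ball (0:ℂ) 1) := diffOn_dslope_zero hud hua
  -- global identities
  have gφ : ∀ z : ℂ, z * ψ z = φ z := by
    intro z
    have h1 := sub_smul_dslope φ 0 z
    rwa [sub_zero, hφ0, sub_zero, smul_eq_mul, ← hψdef] at h1
  have gψ : ∀ z : ℂ, z * u z = ψ z - A := by
    intro z
    have h1 := sub_smul_dslope ψ 0 z
    rwa [sub_zero, smul_eq_mul, ← hudef, ← hAdef] at h1
  have gu : ∀ z : ℂ, z * v z = u z - u 0 := by
    intro z
    have h1 := sub_smul_dslope u 0 z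
    rwa [sub_zero, smul_eq_mul, ← hvdef] at h1
  have gp : ∀ z : ℂ, z * p1 z = p z - 1 := by
    intro z
    have h1 := sub_smul_dslope p 0 z
    rwa [sub_zero, hp0, smul_eq_mul, ← hp1def] at h1
  have gp1 : ∀ z : ℂ, z * p2 z = p1 z - c 1 := by
    intro z
    have h1 := sub_smul_dslope p1 0 z
    rwa [sub_zero, hp10, smul_eq_mul, ← hp2def] at h1
  have gp2 : ∀ z : ℂ, z * p3 z = p2 z - c 2 := by
    intro z
    have h1 := sub_smul_dslope p2 0 z
    rwa [sub_zero, hp20, smul_eq_mul, ← hp3def] at h1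
  -- extraction chain for p
  have P1 : ∀ z ∈ ball (0:ℂ) 1, z ≠ 0 → ψ z * (p z + 1) = p1 z := by
    intro z hz hz0
    apply mul_left_cancel₀ hz0
    have e3 : φ z * (p z + 1) = p z - 1 := by
      rw [hφdef]; exact div_mul_cancel₀ _ (hnz z hz)
    linear_combination (p z + 1) * gφ z + e3 - gp z
  have S1 : A * 2 = c 1 := by
    have h1 := eq_at_zero (F := fun z => ψ z * (p z + 1)) (G := p1)
      ((contAt hψd).mul ((contAt hpd).add continuousAt_const)) (contAt hp1d) P1
    simpa [hp0, hp10, ← hAdef, one_add_one_eq_two] using h1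
  have P2 : ∀ z ∈ ball (0:ℂ) 1, z ≠ 0 → u z * (p z + 1) + A * p1 z = p2 z := by
    intro z hz hz0
    apply mul_left_cancel₀ hz0
    have h1 := P1 z hz hz0
    linear_combination (p z + 1) * gψ z + A * gp z - gp1 z + h1 - S1
  have S2 : u 0 * 2 + A * c 1 = c 2 := by
    have h1 := eq_at_zero (F := fun z => u z * (p z + 1) + A * p1 z) (G := p2)
      (((contAt hud).mul ((contAt hpd).add continuousAt_const)).add
        (continuousAt_const.mul (contAt hp1d))) (contAt hp2d) P2
    simpa [hp0, hp10, hp20, one_add_one_eq_two] using h1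
  have P3 : ∀ z ∈ ball (0:ℂ) 1, z ≠ 0 →
      v z * (p z + 1) + u 0 * p1 z + A * p2 z = p3 z := by
    intro z hz hz0
    apply mul_left_cancel₀ hz0
    have h2 := P2 z hz hz0
    linear_combination (p z + 1) * gu z + (u 0) * gp z + A * gp1 z - gp2 z + h2 - S2
  have S3 : v 0 * 2 + u 0 * c 1 + A * c 2 = c 3 := by
    have h1 := eq_at_zero
      (F := fun z => v z * (p z + 1) + u 0 * p1 z + A * p2 z) (G := p3)
      ((((contAt hvd).mul ((contAt hpd).add continuousAt_const)).add
        (continuousAt_const.mul (contAt hp1d))).add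
        (continuousAt_const.mul (contAt hp2d))) (contAt hp3d) P3
    simpa [hp0, hp10, hp20, hp30, one_add_one_eq_two] using h1
  -- A is real
  have hc1r : c 1 = ((c 1).re : ℂ) := by
    apply Complex.ext <;> simp [hc1im]
  have hA : A = (((c 1).re / 2 : ℝ) : ℂ) := by
    push_cast
    linear_combination S1/2 + hc1r/2
  have hAnorm : ‖A‖ = (c 1).re / 2 := by
    rw [hA, Complex.norm_real, Real.norm_eq_abs, abs_of_nonneg (by linarith)]
  rcases lt_or_eq_of_le hc1hi with hcase | hcase
  · -- main case : c₁ < 2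
    have hAlt : ‖A‖ < 1 := by rw [hAnorm]; linarith
    have hconjA : (starRingEnd ℂ) A = A := by rw [hA]; exact Complex.conj_ofReal _
    have hψ0 : ψ 0 = A := hAdef.symm
    set χ : ℂ → ℂ := fun z => (ψ z - A)/(1 - A * ψ z) with hχdef
    have hχden : ∀ z ∈ ball (0:ℂ) 1, (1:ℂ) - A * ψ z ≠ 0 := by
      intro z hz
      apply one_sub_ne
      rw [norm_mul]
      calc ‖A‖ * ‖ψ z‖ ≤ ‖A‖ * 1 := mul_le_mul_of_nonneg_left (hψb z hz) (norm_nonneg A)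
        _ < 1 := by simpa using hAlt
    have hχd : DifferentiableOn ℂ χ (ball (0:ℂ) 1) :=
      DifferentiableOn.div (hψd.sub (differentiableOn_const A))
        ((differentiableOn_const 1).sub (hψd.const_mul A)) hχden
    have hχa : AnalyticAt ℂ χ 0 := by
      apply AnalyticAt.div (hψa.sub analyticAt_const)
        (analyticAt_const.sub (analyticAt_const.mul hψa))
      exact hχden 0 h0D
    have hχ0 : χ 0 = 0 := by rw [hχdef]; simp [← hAdef]
    have hχb : ∀ z ∈ ball (0:ℂ) 1, ‖χ z‖ ≤ 1 := by
      intro z hz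
      have h1 := moebius_le_one (hψb z hz) hAlt
      rw [hconjA] at h1
      exact h1
    set ψ1 := dslope χ 0 with hψ1def
    have hψ1d : DifferentiableOn ℂ ψ1 (ball (0:ℂ) 1) := diffOn_dslope_zero hχd hχa
    have hψ1a : AnalyticAt ℂ ψ1 0 := analyticAt_dslope_zero hχa
    have hψ1b : ∀ z ∈ ball (0:ℂ) 1, ‖ψ1 z‖ ≤ 1 := schwarz_dslope hχd hχa hχ0 hχb
    set X := ψ1 0 with hXdef
    have hX : ‖X‖ ≤ 1 := hψ1b 0 h0D
    set u1 := dslope ψ1 0 with hu1def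
    have hu1d : DifferentiableOn ℂ u1 (ball (0:ℂ) 1) := diffOn_dslope_zero hψ1d hψ1a
    have hu1a : AnalyticAt ℂ u1 0 := analyticAt_dslope_zero hψ1a
    have gχ : ∀ z : ℂ, z * ψ1 z = χ z := by
      intro z
      have h1 := sub_smul_dslope χ 0 z
      rwa [sub_zero, hχ0, sub_zero, smul_eq_mul, ← hψ1def] at h1
    have gψ1 : ∀ z : ℂ, z * u1 z = ψ1 z - X := by
      intro z
      have h1 := sub_smul_dslope ψ1 0 z
      rwa [sub_zero, smul_eq_mul, ← hu1def, ← hXdef] at h1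
    have P4 : ∀ z ∈ ball (0:ℂ) 1, z ≠ 0 → ψ1 z * (1 - A * ψ z) = u z := by
      intro z hz hz0
      apply mul_left_cancel₀ hz0
      have e : χ z * (1 - A * ψ z) = ψ z - A := by
        rw [hχdef]; exact div_mul_cancel₀ _ (hχden z hz)
      linear_combination (1 - A * ψ z) * gχ z + e - gψ z
    have S4 : X * (1 - A * A) = u 0 := by
      have h1 := eq_at_zero (F := fun z => ψ1 z * (1 - A * ψ z)) (G := u)
        ((contAt hψ1d).mul (continuousAt_const.sub (continuousAt_const.mul (contAt hψd))))
        (contAt hud) P4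
      simpa [← hAdef, ← hXdef] using h1
    have P5 : ∀ z ∈ ball (0:ℂ) 1, z ≠ 0 →
        u1 z * (1 - A * ψ z) - X * A * u z = v z := by
      intro z hz hz0
      apply mul_left_cancel₀ hz0
      have h4 := P4 z hz hz0
      linear_combination (1 - A * ψ z) * gψ1 z - X * A * gψ z - gu z + h4 - S4
    have S5 : u1 0 * (1 - A * A) - X * A * u 0 = v 0 := by
      have h1 := eq_at_zero (F := fun z => u1 z * (1 - A * ψ z) - X * A * u z) (G := v)
        (((contAt hu1d).mul (continuousAt_const.sub
          (continuousAt_const.mul (contAt hψd)))).sub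
          (continuousAt_const.mul (contAt hud))) (contAt hvd) P5
      simpa [← hAdef] using h1
    -- obtain w with S6
    have hW : ∃ w : ℂ, ‖w‖ ≤ 1 ∧ w * (1 - (starRingEnd ℂ) X * X) = u1 0 := by
      rcases lt_or_eq_of_le hX with hXlt | hX1
      · -- second Schur step
        set τ : ℂ → ℂ := fun z => (ψ1 z - X)/(1 - (starRingEnd ℂ) X * ψ1 z) with hτdef
        have hτden : ∀ z ∈ ball (0:ℂ) 1, (1:ℂ) - (starRingEnd ℂ) X * ψ1 z ≠ 0 := by
          intro z hz
          apply one_sub_ne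
          rw [norm_mul, RCLike.norm_conj]
          calc ‖X‖ * ‖ψ1 z‖ ≤ ‖X‖ * 1 :=
                mul_le_mul_of_nonneg_left (hψ1b z hz) (norm_nonneg X)
            _ < 1 := by simpa using hXlt
        have hτd : DifferentiableOn ℂ τ (ball (0:ℂ) 1) :=
          DifferentiableOn.div (hψ1d.sub (differentiableOn_const X))
            ((differentiableOn_const 1).sub (hψ1d.const_mul _)) hτden
        have hτa : AnalyticAt ℂ τ 0 := by
          apply AnalyticAt.div (hψ1a.sub analyticAt_const)
            (analyticAt_const.sub (analyticAt_const.mul hψ1a))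
          exact hτden 0 h0D
        have hτ0 : τ 0 = 0 := by rw [hτdef]; simp [← hXdef]
        have hτb : ∀ z ∈ ball (0:ℂ) 1, ‖τ z‖ ≤ 1 := by
          intro z hz
          exact moebius_le_one (hψ1b z hz) hXlt
        set ψ2 := dslope τ 0 with hψ2def
        have hψ2d : DifferentiableOn ℂ ψ2 (ball (0:ℂ) 1) := diffOn_dslope_zero hτd hτa
        have hψ2b : ∀ z ∈ ball (0:ℂ) 1, ‖ψ2 z‖ ≤ 1 := schwarz_dslope hτd hτa hτ0 hτb
        have gτ : ∀ z : ℂ, z * ψ2 z = τ z := by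
          intro z
          have h1 := sub_smul_dslope τ 0 z
          rwa [sub_zero, hτ0, sub_zero, smul_eq_mul, ← hψ2def] at h1
        have P6 : ∀ z ∈ ball (0:ℂ) 1, z ≠ 0 →
            ψ2 z * (1 - (starRingEnd ℂ) X * ψ1 z) = u1 z := by
          intro z hz hz0
          apply mul_left_cancel₀ hz0
          have e : τ z * (1 - (starRingEnd ℂ) X * ψ1 z) = ψ1 z - X := by
            rw [hτdef]; exact div_mul_cancel₀ _ (hτden z hz)
          linear_combination (1 - (starRingEnd ℂ) X * ψ1 z) * gτ z + e - gψ1 z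
        have S6 : ψ2 0 * (1 - (starRingEnd ℂ) X * X) = u1 0 := by
          have h1 := eq_at_zero
            (F := fun z => ψ2 z * (1 - (starRingEnd ℂ) X * ψ1 z)) (G := u1)
            ((contAt hψ2d).mul (continuousAt_const.sub
              (continuousAt_const.mul (contAt hψ1d)))) (contAt hu1d) P6
          simpa [← hXdef] using h1
        exact ⟨ψ2 0, hψ2b 0 h0D, S6⟩
      · -- |X| = 1 : ψ1 is constant
        have hcst : ∀ z ∈ ball (0:ℂ) 1, ψ1 z = ψ1 0 := by
          apply deriv_zero_of_max hψ1d
          intro z hz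
          rw [← hXdef, hX1]
          exact hψ1b z hz
        have hu10 : u1 0 = 0 := by
          rw [hu1def, dslope_same]
          have hev : ψ1 =ᶠ[𝓝 (0:ℂ)] Function.const ℂ (ψ1 0) :=
            Filter.eventuallyEq_of_mem hnhds hcst
          rw [hev.deriv_eq]
          exact deriv_const 0 (ψ1 0)
        have hXX : (starRingEnd ℂ) X * X = 1 := by
          have h1 : Complex.normSq X = 1 := by
            rw [Complex.normSq_eq_norm_sq, hX1]
            norm_num
          rw [mul_comm, Complex.mul_conj, h1]
          norm_num
        refine ⟨0, by norm_num, ?_⟩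
        rw [hu10, hXX]
        ring
    obtain ⟨w, hw, S6⟩ := hW
    refine ⟨X, w, ?_, ?_, ?_, ?_⟩
    · exact hX
    · exact hw
    · linear_combination (-2) * S2 + (-4) * S4 + (c 1 - (c 1 + 2*A) * X) * S1
    · have hKabs : (((‖X‖ : ℝ) : ℂ))^2 = (starRingEnd ℂ) X * X := by
        rw [← Complex.ofReal_pow, Complex.sq_norm, mul_comm, Complex.mul_conj]
      rw [hKabs]
      have hAc : c 1 = 2 * A := by linear_combination -S1
      have hc2v : c 2 = 2*X*(1 - A^2) + 2*A^2 := by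
        linear_combination -S2 - 2*S4 - A*S1
      have hu0v : u 0 = X*(1 - A^2) := by linear_combination -S4
      have hu1v : u1 0 = w*(1 - (starRingEnd ℂ) X * X) := by linear_combination -S6
      have hv0v : v 0 = w*(1 - (starRingEnd ℂ) X * X)*(1 - A^2) - X^2*A*(1 - A^2) := by
        linear_combination -S5 + (1 - A^2)*hu1v - X*A*hu0v
      have hc3v : c 3 = 2*(w*(1 - (starRingEnd ℂ) X * X)*(1 - A^2) - X^2*A*(1 - A^2))
          + X*(1 - A^2)*(2*A) + A*(2*X*(1 - A^2) + 2*A^2) := by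
        linear_combination -S3 + 2*hv0v + (c 1)*hu0v + A*hc2v + X*(1 - A^2)*hAc
      rw [hAc, hc3v]
      ring
  · -- boundary case : c₁ = 2, hence A = 1 and ψ is constant
    have hAnorm1 : ‖A‖ = 1 := by rw [hAnorm, hcase]; norm_num
    have hcst : ∀ z ∈ ball (0:ℂ) 1, ψ z = ψ 0 := by
      apply deriv_zero_of_max hψd
      intro z hz
      rw [← hAdef, hAnorm1]
      exact hψb z hz
    have hu0 : u 0 = 0 := by
      rw [hudef, dslope_same]
      have hev : ψ =ᶠ[𝓝 (0:ℂ)] Function.const ℂ (ψ 0) :=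
        Filter.eventuallyEq_of_mem hnhds hcst
      rw [hev.deriv_eq]
      exact deriv_const 0 (ψ 0)
    have huz : ∀ z ∈ ball (0:ℂ) 1, u z = 0 := by
      intro z hz
      rcases eq_or_ne z 0 with rfl | hz0
      · exact hu0
      · have h1 := gψ z
        rw [hcst z hz, ← hAdef, sub_self] at h1
        exact (mul_eq_zero.mp h1).resolve_left hz0
    have hv0 : v 0 = 0 := by
      rw [hvdef, dslope_same]
      have hev : u =ᶠ[𝓝 (0:ℂ)] (fun _ => (0:ℂ)) :=
        Filter.eventuallyEq_of_mem hnhds huz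
      rw [hev.deriv_eq]
      exact deriv_const 0 0
    refine ⟨0, 0, by norm_num, by norm_num, ?_, ?_⟩
    · linear_combination (-2)*S2 + 4*hu0 + (c 1)*S1
    · have : ((‖(0:ℂ)‖ : ℝ) : ℂ) = 0 := by norm_num
      rw [this]
      have e2 : 2 * c 2 = c 1^2 := by
        linear_combination (-2)*S2 + 4*hu0 + (c 1)*S1
      linear_combination (-4)*S3 + 8*hv0 + 4*(c 1)*hu0 + 2*(c 2)*S1 + (c 1)*e2
end

section
/- Let 1 ≤ α ≤ 2 and set β = 2 − α/2. Then for all real c with 0 ≤ c ≤ 2 and all real δ with 0 ≤ δ ≤ 1, the quantity F(c, δ) = (β²/48)·[(4β² − 1)c⁴ + 8(4 − c²)c + 2(4 − c²)c²δ + (c − 6)(c − 2)(4 − c²)δ²] satisfies F(c, δ) ≤ (β²/3)·[4(β² − 1) + 3]. -/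
/-- For `1 ≤ α ≤ 2`, `β = 2 - α/2`, `c ∈ [0,2]`, `δ ∈ [0,1]`:
`(β²/48)[(4β² - 1)c⁴ + 8(4 - c²)c + 2(4 - c²)c²δ + (c - 6)(c - 2)(4 - c²)δ²]
  ≤ (β²/3)[4(β² - 1) + 3]`. -/
theorem F_bound_starlike (α : ℝ) (hα₁ : 1 ≤ α) (hα₂ : α ≤ 2) (β : ℝ) (hβ : β = 2 - α / 2)
    (c δ : ℝ) (hc₀ : 0 ≤ c) (hc₂ : c ≤ 2) (hδ₀ : 0 ≤ δ) (hδ₁ : δ ≤ 1) :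
    (β ^ 2 / 48) * ((4 * β ^ 2 - 1) * c ^ 4 + 8 * (4 - c ^ 2) * c
        + 2 * (4 - c ^ 2) * c ^ 2 * δ + (c - 6) * (c - 2) * (4 - c ^ 2) * δ ^ 2) ≤
      (β ^ 2 / 3) * (4 * (β ^ 2 - 1) + 3) := by
  have hb1 : 1 ≤ β := by rw [hβ]; linarith
  have hb : (1:ℝ) ≤ β ^ 2 := by nlinarith
  have hcs : c ^ 2 ≤ 4 := by nlinarith
  have hc4 : c ^ 4 ≤ 16 := by nlinarith [sq_nonneg c, sq_nonneg (c ^ 2 - 4)]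
  have hcube : 0 ≤ 3 * c ^ 3 - 2 * c ^ 2 - 4 * c + 24 := by
    nlinarith [mul_nonneg hc₀ (sq_nonneg (c - 1)), sq_nonneg (c - 1)]
  have t1 : 0 ≤ (β ^ 2 - 1) * (16 - c ^ 4) := by nlinarith
  have t2 : 0 ≤ (1 - δ) * ((2 - c) * (3 * c ^ 3 - 2 * c ^ 2 - 4 * c + 24)) := by
    apply mul_nonneg (by linarith)
    exact mul_nonneg (by linarith) hcube
  have t3 : 0 ≤ ((6 - c) * (2 - c) * (4 - c ^ 2)) * (δ * (1 - δ)) := by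
    apply mul_nonneg
    · apply mul_nonneg (mul_nonneg (by linarith) (by linarith))
      nlinarith
    · exact mul_nonneg hδ₀ (by linarith)
  have hkey : (4 * β ^ 2 - 1) * c ^ 4 + 8 * (4 - c ^ 2) * c
        + 2 * (4 - c ^ 2) * c ^ 2 * δ + (c - 6) * (c - 2) * (4 - c ^ 2) * δ ^ 2
        ≤ 64 * β ^ 2 - 16 := by nlinarith [t1, t2, t3]
  calc (β ^ 2 / 48) * ((4 * β ^ 2 - 1) * c ^ 4 + 8 * (4 - c ^ 2) * c
        + 2 * (4 - c ^ 2) * c ^ 2 * δ + (c - 6) * (c - 2) * (4 - c ^ 2) * δ ^ 2)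
      ≤ (β ^ 2 / 48) * (64 * β ^ 2 - 16) :=
        mul_le_mul_of_nonneg_left hkey (by positivity)
    _ = (β ^ 2 / 3) * (4 * (β ^ 2 - 1) + 3) := by ring
end

section
/- Let 1 ≤ α ≤ 2 and set β = 2 − α/2. Then for all real c with 0 ≤ c ≤ 2 and all real δ with 0 ≤ δ ≤ 1, the quantity F(c, δ) = (β²/144)·[((1 + β − 2β²)/2)c⁴ + 3c(4 − c²) + ((2 + β)/2)c²(4 − c²)δ + ((c − 2)(c − 4)(4 − c²)/2)δ²] satisfies F(c, δ) ≤ (β²/144)·(17β² + 2β + 17)/(1 + β²). -/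
theorem F_aux0 (β : ℝ) (hβ1 : 1 ≤ β) (hβ2 : β ≤ 3/2) (c : ℝ) (hc₀ : 0 ≤ c) (hc₂ : c ≤ 2) :
    (1 + β^2) * (((1 + β - 2 * β ^ 2) / 2) * c ^ 4 + 3 * c * (4 - c ^ 2)) ≤
      17 * β ^ 2 + 2 * β + 17 := by
  nlinarith [sq_nonneg c, pow_le_pow_left₀ hc₀ hc₂ 4, sq_nonneg (c-1), sq_nonneg (β-1),
    mul_nonneg hc₀ (sub_nonneg.2 hc₂), sq_nonneg (c*(β-1)), sq_nonneg (c^2*(2*β+1)),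
    mul_nonneg (mul_nonneg hc₀ hc₀) (sub_nonneg.2 hc₂), sq_nonneg (c+1)]

theorem F_aux1 (β : ℝ) (hβ1 : 1 ≤ β) (hβ2 : β ≤ 3/2) (c : ℝ) (hc₀ : 0 ≤ c) (hc₂ : c ≤ 2) :
    (1 + β^2) * (((1 + β - 2 * β ^ 2) / 2) * c ^ 4 + 3 * c * (4 - c ^ 2)
      + ((2 + β) / 2) * c ^ 2 * (4 - c ^ 2) + ((c - 2) * (c - 4) * (4 - c ^ 2) / 2)) ≤
      17 * β ^ 2 + 2 * β + 17 := by
  nlinarith [sq_nonneg ((1 + β^2) * (1 - c^2) - β^2 + β)]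

/-- For `1 ≤ α ≤ 2`, `β = 2 - α/2`, `c ∈ [0,2]`, `δ ∈ [0,1]`:
`(β²/144)[((1 + β - 2β²)/2)c⁴ + 3c(4 - c²) + ((2 + β)/2)c²(4 - c²)δ
  + ((c - 2)(c - 4)(4 - c²)/2)δ²] ≤ (β²/144)(17β² + 2β + 17)/(1 + β²)`. -/
theorem F_bound_convex (α : ℝ) (hα₁ : 1 ≤ α) (hα₂ : α ≤ 2) (β : ℝ) (hβ : β = 2 - α / 2)
    (c δ : ℝ) (hc₀ : 0 ≤ c) (hc₂ : c ≤ 2) (hδ₀ : 0 ≤ δ) (hδ₁ : δ ≤ 1) :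
    (β ^ 2 / 144) * (((1 + β - 2 * β ^ 2) / 2) * c ^ 4 + 3 * c * (4 - c ^ 2)
        + ((2 + β) / 2) * c ^ 2 * (4 - c ^ 2) * δ
        + ((c - 2) * (c - 4) * (4 - c ^ 2) / 2) * δ ^ 2) ≤
      (β ^ 2 / 144) * ((17 * β ^ 2 + 2 * β + 17) / (1 + β ^ 2)) := by
  have hβ1 : 1 ≤ β := by rw [hβ]; linarith
  have hβ2 : β ≤ 3/2 := by rw [hβ]; linarith
  have h0 := F_aux0 β hβ1 hβ2 c hc₀ hc₂
  have h1 := F_aux1 β hβ1 hβ2 c hc₀ hc₂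
  have hA : 0 ≤ (1 + β^2) * ((c - 2) * (c - 4) * (4 - c ^ 2) / 2) * (δ * (1 - δ)) := by
    have : 0 ≤ (c - 2) * (c - 4) * (4 - c ^ 2) := by
      nlinarith [mul_nonneg (mul_nonneg (by linarith : (0:ℝ) ≤ 2 - c)
        (by linarith : (0:ℝ) ≤ 4 - c)) (mul_nonneg (by linarith : (0:ℝ) ≤ 2 - c)
        (by linarith : (0:ℝ) ≤ 2 + c))]
    have : 0 ≤ δ * (1 - δ) := mul_nonneg hδ₀ (by linarith)
    positivity
  have key : (1 + β^2) * (((1 + β - 2 * β ^ 2) / 2) * c ^ 4 + 3 * c * (4 - c ^ 2)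
        + ((2 + β) / 2) * c ^ 2 * (4 - c ^ 2) * δ
        + ((c - 2) * (c - 4) * (4 - c ^ 2) / 2) * δ ^ 2) ≤ 17 * β ^ 2 + 2 * β + 17 := by
    nlinarith [mul_nonneg (by linarith : (0:ℝ) ≤ 1 - δ)
        (sub_nonneg.2 h0), mul_nonneg hδ₀ (sub_nonneg.2 h1), hA]
  have hpos : (0:ℝ) < 1 + β ^ 2 := by positivity
  have hG : (((1 + β - 2 * β ^ 2) / 2) * c ^ 4 + 3 * c * (4 - c ^ 2)
        + ((2 + β) / 2) * c ^ 2 * (4 - c ^ 2) * δ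
        + ((c - 2) * (c - 4) * (4 - c ^ 2) / 2) * δ ^ 2) ≤
      (17 * β ^ 2 + 2 * β + 17) / (1 + β ^ 2) := by
    rw [le_div_iff₀ hpos]; nlinarith [key]
  have hβ2' : (0:ℝ) ≤ β ^ 2 / 144 := by positivity
  exact mul_le_mul_of_nonneg_left hG hβ2'
end
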